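/- Let D be a squarefree positive integer with D ≠ 1 (equivalently, √−D ∉ ℚ(ζ_4)). If a triple (t, r, q) of nonzero polynomials in ℚ[x] parameterizes a complete family of pairing-friendly elliptic curves with embedding degree k = 4 and CM discriminant D, then ρ(t, r, q) ≠ 1, i.e., deg q ≠ deg r. -/

import Mathlib

open Polynomial

/-- `f ∈ ℚ[x]` represents integers: there is an integer `a` with `f(a) ∈ ℤ`. -/
def RepresentsIntegers (f : ℚ[X]) : Prop :=
  ∃ a n : ℤ, f.eval (a : ℚ) = (n : ℚ)

/-- `f ∈ ℚ[x]` represents primes: `f` is nonconstant, irreducible over `ℚ`,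
has positive leading coefficient, represents integers, and no prime number
divides every integer value `f(a)` with `a ∈ ℤ`, `f(a) ∈ ℤ`. -/
def RepresentsPrimes (f : ℚ[X]) : Prop :=
  0 < f.natDegree ∧ Irreducible f ∧ 0 < f.leadingCoeff ∧ RepresentsIntegers f ∧
    ∀ p : ℕ, p.Prime → ∃ a n : ℤ, f.eval (a : ℚ) = (n : ℚ) ∧ ¬ (p : ℤ) ∣ n

/-- `(t, r, q)` parameterizes a complete family of pairing-friendly elliptic curves
with embedding degree `k` and CM discriminant `D`:
(i) `r` represents primes; (ii) `q` represents primes; (iii) `r ∣ q + 1 - t`;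
(iv) `r ∣ Φ_k(t - 1)`; (v) `D·y² = 4q - t²` for some `y ∈ ℚ[x]`. -/
def IsCompleteFamily (k D : ℕ) (t r q : ℚ[X]) : Prop :=
  t ≠ 0 ∧ r ≠ 0 ∧ q ≠ 0 ∧
  RepresentsPrimes r ∧ RepresentsPrimes q ∧
  r ∣ (q + 1 - t) ∧
  r ∣ (cyclotomic k ℚ).comp (t - 1) ∧
  ∃ y : ℚ[X], (D : ℚ[X]) * y ^ 2 = 4 * q - t ^ 2

lemma int_of_rat_sq (s : ℚ) (k : ℤ) (h : s^2 = (k:ℚ)) : ∃ m : ℤ, (m:ℚ) = s ∧ m^2 = k := by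
  have hd : (s*s).den = 1 := by
    rw [← pow_two, h]; exact Rat.den_intCast k
  rw [Rat.mul_self_den] at hd
  have hd1 : s.den = 1 := by nlinarith [s.pos]
  refine ⟨s.num, (Rat.den_eq_one_iff s).mp hd1, ?_⟩
  have : ((s.num : ℚ))^2 = (k:ℚ) := by rw [(Rat.den_eq_one_iff s).mp hd1]; exact h
  exact_mod_cast this

lemma no_sq_3mod4 (s : ℚ) (n : ℤ) (h : s^2 = ((4*n+3 : ℤ) : ℚ)) : False := by
  obtain ⟨m, -, hm⟩ := int_of_rat_sq s _ h
  have h4 : ((m:ZMod 4))^2 = ((4*n+3 : ℤ) : ZMod 4) := by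
    exact_mod_cast congrArg (Int.cast : ℤ → ZMod 4) hm
  have h40 : (4 : ZMod 4) = 0 := rfl
  have h43 : ((4*n+3 : ℤ) : ZMod 4) = 3 := by push_cast; rw [h40]; ring
  rw [h43] at h4
  revert h4
  have : ∀ z : ZMod 4, z^2 ≠ 3 := by decide
  exact this _

lemma sq_of_squarefree (D : ℕ) (hD : Squarefree D) (s : ℚ) (h : s^2 = (D:ℚ)) : D = 1 := by
  obtain ⟨m, -, hm⟩ := int_of_rat_sq s (D:ℤ) (by exact_mod_cast h)
  have hm' : m.natAbs * m.natAbs = D := by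
    have h2 : m.natAbs ^ 2 = D := by
      have := congrArg Int.natAbs hm
      simpa [Int.natAbs_pow] using this
    nlinarith [h2]
  have := hD m.natAbs ⟨1, by rw [mul_one, hm']⟩
  have h1 : m.natAbs = 1 := Nat.isUnit_iff.mp this
  rw [h1] at hm'
  simpa using hm'.symm

set_option maxHeartbeats 2000000 in
/-- No ideal complete family with embedding degree 4 when `√-D ∉ ℚ(ζ_4)`, i.e. `D ≠ 1`. -/
theorem no_ideal_family_k4 (D : ℕ) (hD : Squarefree D) (hDpos : 0 < D) (hD1 : D ≠ 1)
    (t r q : ℚ[X]) (h : IsCompleteFamily 4 D t r q) :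
    q.natDegree ≠ r.natDegree := by
  intro hcon
  obtain ⟨ht0, hr0, hq0, ⟨hrdeg, hrirr, hrlc, hrint, -⟩, ⟨hqdeg, hqirr, hqlc, hqint, -⟩,
    hdvd1, hdvd2, y, hy⟩ := h
  -- cyclotomic 4 = X^2 + 1
  have hc4 : cyclotomic 4 ℚ = X^2 + 1 := by
    have h4 : (4:ℕ) = 2 ^ (1+1) := by norm_num
    rw [h4, cyclotomic_prime_pow_eq_geom_sum Nat.prime_two]
    simp [Finset.sum_range_succ, pow_mul]
    ring
  rw [hc4, add_comp, pow_comp, X_comp, one_comp] at hdvd2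
  -- now hdvd2 : r ∣ (t-1)^2 + 1
  set m := t.natDegree with hmdef
  have hDne : (D:ℚ) ≠ 0 := by positivity
  have hy' : C (D:ℚ) * y^2 = 4*q - t^2 := by rw [C_eq_natCast]; exact hy
  have htm : (t - 1 : ℚ[X]).natDegree = m := by
    rw [show (1:ℚ[X]) = C 1 from C_1.symm, natDegree_sub_C]
  have hF0 : ((t-1)^2 + 1 : ℚ[X]) ≠ 0 := by
    intro hF
    have := congrArg (eval 0) hF
    simp only [eval_add, eval_pow, eval_one, eval_zero] at this
    nlinarith [sq_nonneg ((t-1).eval 0)]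
  have hFdeg : ((t-1)^2 + 1 : ℚ[X]).natDegree ≤ 2*m := by
    refine le_trans (natDegree_add_le _ _) ?_
    simp [natDegree_pow, htm]
  have hm1 : 1 ≤ m := by
    by_contra h0
    push_neg at h0
    have := natDegree_le_of_dvd hdvd2 hF0
    omega
  -- 2m ≤ deg q
  have h2m : 2*m ≤ q.natDegree := by
    by_contra hlt
    push_neg at hlt
    have ht2 : (t^2 : ℚ[X]).natDegree = 2*m := by rw [natDegree_pow]
    have h4C : ((4:ℚ[X])) = C (4:ℚ) := (map_ofNat C 4).symm
    have h4q : (4*q : ℚ[X]).natDegree = q.natDegree := by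
      rw [h4C, natDegree_C_mul (by norm_num : (4:ℚ) ≠ 0)]
    have hRHS : (4*q - t^2 : ℚ[X]).natDegree = 2*m := by
      rw [natDegree_sub_eq_right_of_natDegree_lt (by omega), ht2]
    have hLHS : (C (D:ℚ) * y^2).natDegree = 2*m := by rw [hy']; exact hRHS
    have hyd : (y^2 : ℚ[X]).natDegree = 2*m := by
      rw [natDegree_C_mul hDne] at hLHS; exact hLHS
    have hco := congrArg (fun p => coeff p (2*m)) hy'
    simp only [coeff_C_mul, coeff_sub] at hco
    have hqc : q.coeff (2*m) = 0 := coeff_eq_zero_of_natDegree_lt hlt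
    have hq4c : (4*q : ℚ[X]).coeff (2*m) = 0 := by
      rw [h4C, coeff_C_mul, hqc, mul_zero]
    have htc : (t^2 : ℚ[X]).coeff (2*m) = t.leadingCoeff^2 := by
      rw [show 2*m = (t^2 : ℚ[X]).natDegree from ht2.symm, coeff_natDegree, leadingCoeff_pow]
    have hyc : (y^2 : ℚ[X]).coeff (2*m) = y.leadingCoeff^2 := by
      rw [show 2*m = (y^2 : ℚ[X]).natDegree from hyd.symm, coeff_natDegree, leadingCoeff_pow]
    rw [hq4c, hyc, htc] at hco
    have hD0 : (0:ℚ) < D := by exact_mod_cast hDpos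
    have hlt0 : t.leadingCoeff ≠ 0 := leadingCoeff_ne_zero.mpr ht0
    have hltpos : 0 < t.leadingCoeff^2 :=
      lt_of_le_of_ne (sq_nonneg _) (Ne.symm (pow_ne_zero 2 hlt0))
    nlinarith [sq_nonneg y.leadingCoeff]
  -- r = (t-1)^2+1 up to constant
  obtain ⟨s₂, hs₂⟩ := hdvd2
  have hs₂0 : s₂ ≠ 0 := by rintro rfl; rw [mul_zero] at hs₂; exact hF0 hs₂
  have hdegF : ((t-1)^2+1 : ℚ[X]).natDegree = r.natDegree + s₂.natDegree := by
    rw [hs₂, natDegree_mul hr0 hs₂0]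
  have hs₂d : s₂.natDegree = 0 := by omega
  have hN : r.natDegree = 2*m := by omega
  obtain ⟨c', hs₂C⟩ : ∃ a : ℚ, s₂ = C a := ⟨s₂.coeff 0, eq_C_of_natDegree_eq_zero hs₂d⟩
  have hc'0 : c' ≠ 0 := by rintro hcc; exact hs₂0 (by rw [hs₂C, hcc, C_0])
  have hs2' : (t-1)^2 + 1 = C c' * r := by rw [hs₂, hs₂C, mul_comm]
  -- q + 1 - t = c * r
  obtain ⟨s₁, hs₁⟩ := hdvd1
  have hs₁0 : s₁ ≠ 0 := by
    rintro rfl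
    rw [mul_zero] at hs₁
    have hq' : q = t - 1 := by linear_combination hs₁
    have : q.natDegree = m := by rw [hq', htm]
    omega
  have hq1t : (q + 1 - t : ℚ[X]).natDegree ≤ r.natDegree := by
    have e : q + 1 - t = q + (1 - t) := by ring
    rw [e]
    refine le_trans (natDegree_add_le _ _) ?_
    have : (1 - t : ℚ[X]).natDegree ≤ m := by
      refine le_trans (natDegree_sub_le _ _) ?_
      simp [hmdef]
    omega
  have hdeg1 : (q + 1 - t : ℚ[X]).natDegree = r.natDegree + s₁.natDegree := by
    rw [hs₁, natDegree_mul hr0 hs₁0]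
  have hs₁d : s₁.natDegree = 0 := by omega
  obtain ⟨c, hs₁C⟩ : ∃ a : ℚ, s₁ = C a := ⟨s₁.coeff 0, eq_C_of_natDegree_eq_zero hs₁d⟩
  have hc0 : c ≠ 0 := by rintro hcc; exact hs₁0 (by rw [hs₁C, hcc, C_0])
  have hs1' : q + 1 - t = C c * r := by rw [hs₁, hs₁C, mul_comm]
  -- master identity
  obtain ⟨β, hβc'⟩ : ∃ b : ℚ, b * c' = 4*c - c' := ⟨(4*c - c')/c', div_mul_cancel₀ _ hc'0⟩
  have hCbc : C β * C c' = 4 * C c - C c' := by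
    rw [← C_mul, hβc']
    rw [C_sub, C_mul, map_ofNat]
  have E5 : C (D:ℚ) * y^2 = C β * ((t-1)^2 + 1) + 2*(t-1) := by
    linear_combination hy' + 4 * hs1' - (C β + 1) * hs2' - r * hCbc
  by_cases hβ0 : β = 0
  · -- case β = 0 : q never takes integer values
    have hcc4 : C c' = 4 * C c := by
      have h1 : c' = 4*c := by
        have := hβc'
        rw [hβ0, zero_mul] at this
        linarith
      rw [h1, C_mul, map_ofNat]
    have h4q : 4*q = ((t-1)^2 + 1) + 4*(t-1) := by
      linear_combination 4*hs1' - hs2' - r*hcc4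
    obtain ⟨a, N₀, hEval⟩ := hqint
    have hev := congrArg (eval (a:ℚ)) h4q
    simp only [eval_mul, eval_add, eval_sub, eval_pow, eval_one, eval_ofNat] at hev
    rw [hEval] at hev
    apply no_sq_3mod4 (t.eval (a:ℚ) + 1) N₀
    push_cast
    linear_combination -hev
  · -- case β ≠ 0
    obtain ⟨v, hv⟩ : ∃ v : ℚ[X], v = t - 1 + C β⁻¹ := ⟨_, rfl⟩
    have hββ : C β * C β⁻¹ = 1 := by rw [← C_mul, mul_inv_cancel₀ hβ0, C_1]
    obtain ⟨γ, hγdef⟩ : ∃ g : ℚ, g = β - β⁻¹ := ⟨_, rfl⟩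
    have hγ' : C γ = C β - C β⁻¹ := by rw [hγdef, C_sub]
    have E6 : C (D:ℚ) * y^2 = C β * v^2 + C γ := by
      rw [hv]
      linear_combination E5 - (2*(t-1) + C β⁻¹) * hββ - hγ'
    have hvdeg : v.natDegree = m := by
      have e : v = t + C (β⁻¹ - 1) := by rw [hv, C_sub, C_1]; ring
      rw [e, natDegree_add_C]
    by_cases hγ0 : γ = 0
    · -- β = ±1, leading coefficient argument
      rw [hγ0, C_0, add_zero] at E6
      have hv0 : v ≠ 0 := by
        intro hvz
        rw [hvz, natDegree_zero] at hvdeg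
        omega
      have hlc := congrArg leadingCoeff E6
      rw [leadingCoeff_mul, leadingCoeff_mul, leadingCoeff_C, leadingCoeff_C,
        leadingCoeff_pow, leadingCoeff_pow] at hlc
      have hlcv : v.leadingCoeff ≠ 0 := leadingCoeff_ne_zero.mpr hv0
      have hlcvpos : 0 < v.leadingCoeff^2 :=
        lt_of_le_of_ne (sq_nonneg _) (Ne.symm (pow_ne_zero 2 hlcv))
      have hβ2 : (β - 1) * (β + 1) = 0 := by
        have hb : β * β = 1 := by
          have hz : β - β⁻¹ = 0 := by rw [← hγdef]; exact hγ0
          field_simp at hz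
          linarith [hz]
        nlinarith [hb]
      have hD0 : (0:ℚ) < D := by exact_mod_cast hDpos
      rcases mul_eq_zero.mp hβ2 with hb1 | hb1
      · -- β = 1
        have hβ1 : β = 1 := by linarith
        rw [hβ1, one_mul] at hlc
        have hlcy : y.leadingCoeff ≠ 0 := by
          intro h0
          rw [h0] at hlc
          simp at hlc
          nlinarith [hlc]
        apply hD1
        apply sq_of_squarefree D hD (v.leadingCoeff / y.leadingCoeff)
        field_simp
        linear_combination -hlc
      · -- β = -1 : sign contradiction
        have hβ1 : β = -1 := by linarith
        rw [hβ1] at hlc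
        nlinarith [sq_nonneg y.leadingCoeff]
    · -- γ ≠ 0 : derivative argument
      have hdegR : (C β * v^2 + C γ : ℚ[X]).natDegree = 2*m := by
        rw [natDegree_add_C, natDegree_C_mul hβ0, natDegree_pow, hvdeg]
      have hydeg : y.natDegree = m := by
        have hh := congrArg natDegree E6
        rw [natDegree_C_mul hDne, natDegree_pow, hdegR] at hh
        omega
      have hcop : IsCoprime y v := by
        refine ⟨C γ⁻¹ * (C (D:ℚ) * y), -(C γ⁻¹ * (C β * v)), ?_⟩
        have hinv : C γ⁻¹ * C γ = 1 := by rw [← C_mul, inv_mul_cancel₀ hγ0, C_1]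
        linear_combination C γ⁻¹ * E6 + hinv
      have hd := congrArg derivative E6
      simp only [derivative_mul, derivative_C, derivative_pow, derivative_add, zero_mul,
        add_zero, zero_add, mul_zero, Nat.cast_ofNat, map_ofNat] at hd
      have hder : C (D:ℚ) * (y * derivative y) * 2 = C β * (v * derivative v) * 2 := by
        linear_combination hd
      have hder2 := mul_right_cancel₀ (by norm_num : (2:ℚ[X]) ≠ 0) hder
      have hdvdv : v ∣ C (D:ℚ) * (y * derivative y) := by
        rw [hder2]
        exact ⟨C β * derivative v, by ring⟩
      have hdvdyy : v ∣ y * derivative y := by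
        have h3 := hdvdv.mul_left (C ((D:ℚ)⁻¹))
        rwa [← mul_assoc, ← C_mul, inv_mul_cancel₀ hDne, C_1, one_mul] at h3
      have hdy : v ∣ derivative y := (hcop.symm).dvd_of_dvd_mul_left hdvdyy
      have hyne : derivative y ≠ 0 := by
        intro h0
        have := natDegree_eq_zero_of_derivative_eq_zero h0
        omega
      have hle := natDegree_le_of_dvd hdy hyne
      have hlt2 := natDegree_derivative_lt (p := y) (by omega)
      omega
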